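/- Let X be a separable F-space and let (T_a)_{a∈ℝ^d} be an operator group on X. Assume there exists a dense set D ⊆ X such that for any f ∈ D and any ε > 0, there exists C > 0 such that for any N ≥ 1 and any a_1, …, a_N ∈ ℝ^d with ‖a_i − a_j‖ ≥ C for all i ≠ j and ‖a_i‖ ≥ C for all i, one has ‖Σ_{i=1}^N T_{a_i} f‖ < ε. Then (T_a)_{a∈ℝ^d} has the uniform mixing property. -/

import Mathlib

/-- a sufficient criterion (smallness of sums `Σ T_{a_i} f` over
well-separated families, on a dense set) for an operator group on a separable
F-space to have the uniform mixing property. -/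
theorem stmt_12 {X : Type*} [AddCommGroup X] [Module ℝ X] [MetricSpace X]
    [CompleteSpace X] [TopologicalSpace.SeparableSpace X]
    [IsTopologicalAddGroup X] [ContinuousSMul ℝ X]
    (hinv : ∀ x y z : X, dist (x + z) (y + z) = dist x y)
    {d : ℕ} (T : EuclideanSpace ℝ (Fin d) → X →L[ℝ] X)
    (hid : T 0 = ContinuousLinearMap.id ℝ X)
    (hadd : ∀ a b, T (a + b) = (T a).comp (T b))
    (hcrit : ∃ D : Set X, Dense D ∧ ∀ f ∈ D, ∀ ε : ℝ, 0 < ε →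
      ∃ C : ℝ, 0 < C ∧ ∀ N : ℕ, 1 ≤ N → ∀ a : Fin N → EuclideanSpace ℝ (Fin d),
        (∀ i j, i ≠ j → C ≤ ‖a i - a j‖) → (∀ i, C ≤ ‖a i‖) →
        dist (∑ i, T (a i) f) 0 < ε) :
    ∀ U V : Set X, IsOpen U → IsOpen V → U.Nonempty → V.Nonempty →
      ∃ C > (0:ℝ), ∀ p : ℕ, 1 ≤ p → ∀ a : Fin p → EuclideanSpace ℝ (Fin d),
        (∀ i, C ≤ ‖a i‖) → (∀ i j, i ≠ j → C ≤ ‖a i - a j‖) →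
        ∃ f ∈ U, ∀ j, T (a j) f ∈ V := by
  obtain ⟨D, hD, hDc⟩ := hcrit
  have key : ∀ x y : X, dist (x + y) y = dist x 0 := fun x y => by
    calc dist (x + y) y = dist (x + y) (0 + y) := by rw [zero_add]
      _ = dist x 0 := hinv x 0 y
  have tri2 : ∀ x y z : X, dist (x + y) z ≤ dist x 0 + dist y z := fun x y z => by
    calc dist (x + y) z ≤ dist (x + y) y + dist y z := dist_triangle _ _ _
      _ = dist x 0 + dist y z := by rw [key]
  rintro U V hU hV ⟨u, hu⟩ ⟨v, hv⟩
  obtain ⟨ε₁, hε₁, hball₁⟩ := Metric.isOpen_iff.1 hU u hu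
  obtain ⟨ε₂, hε₂, hball₂⟩ := Metric.isOpen_iff.1 hV v hv
  set ε := min ε₁ ε₂ with hε
  have hεpos : 0 < ε := lt_min hε₁ hε₂
  obtain ⟨f₀, hf₀D, hf₀⟩ := hD.exists_dist_lt u (by positivity : (0:ℝ) < ε / 2)
  obtain ⟨g₀, hg₀D, hg₀⟩ := hD.exists_dist_lt v (by positivity : (0:ℝ) < ε / 2)
  obtain ⟨C₁, hC₁, h₁⟩ := hDc f₀ hf₀D (ε / 4) (by positivity)
  obtain ⟨C₂, hC₂, h₂⟩ := hDc g₀ hg₀D (ε / 4) (by positivity)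
  refine ⟨max C₁ C₂, lt_max_of_lt_left hC₁, ?_⟩
  intro p hp a hnorm hsep
  obtain ⟨m, rfl⟩ : ∃ m, p = m + 1 := Nat.exists_eq_succ_of_ne_zero (by omega)
  set S : X := ∑ j, T (-(a j)) g₀ with hS
  refine ⟨f₀ + S, ?_, ?_⟩
  · -- f₀ + S ∈ U
    have hS0 : dist S 0 < ε / 4 := by
      apply h₂ (m + 1) (by omega) (fun j => -(a j))
      · intro i j hij
        have : -(a i) - -(a j) = a j - a i := by abel
        rw [this]
        exact le_trans (le_max_right C₁ C₂) (hsep j i hij.symm)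
      · intro i
        rw [norm_neg]
        exact le_trans (le_max_right C₁ C₂) (hnorm i)
    apply hball₁
    rw [Metric.mem_ball]
    calc dist (f₀ + S) u = dist (S + f₀) u := by rw [add_comm]
      _ ≤ dist S 0 + dist f₀ u := tri2 _ _ _
      _ < ε / 4 + ε / 2 := by
          have := dist_comm u f₀ ▸ hf₀
          exact add_lt_add hS0 this
      _ < ε := by linarith
      _ ≤ ε₁ := min_le_left _ _
  · -- images in V
    intro k
    set R : X := ∑ i : Fin m, T (a k + -(a (k.succAbove i))) g₀ with hR
    have hTf : T (a k) (f₀ + S) = (T (a k) f₀ + R) + g₀ := by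
      rw [map_add, hS, map_sum]
      have hc : ∀ j, T (a k) (T (-(a j)) g₀) = T (a k + -(a j)) g₀ := fun j => by
        rw [hadd]; rfl
      rw [Finset.sum_congr rfl (fun j _ => hc j)]
      rw [Fin.sum_univ_succAbove (fun j => T (a k + -(a j)) g₀) k]
      rw [add_neg_cancel, hid]
      simp only [ContinuousLinearMap.id_apply]
      abel
    have hTf₀ : dist (T (a k) f₀) 0 < ε / 4 := by
      have := h₁ 1 le_rfl (fun _ => a k)
        (fun i j hij => absurd (Subsingleton.elim i j) hij)
        (fun _ => le_trans (le_max_left C₁ C₂) (hnorm k))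
      simpa using this
    have hRb : dist R 0 < ε / 4 := by
      rcases Nat.eq_zero_or_pos m with hm | hm
      · subst hm
        simp [hR, hεpos]
      · apply h₂ m hm (fun i => a k + -(a (k.succAbove i)))
        · intro i j hij
          have : (a k + -(a (k.succAbove i))) - (a k + -(a (k.succAbove j)))
              = a (k.succAbove j) - a (k.succAbove i) := by abel
          rw [this]
          refine le_trans (le_max_right C₁ C₂) (hsep _ _ ?_)
          exact fun h => hij (Fin.succAbove_right_injective h).symm
        · intro i
          have : a k + -(a (k.succAbove i)) = a k - a (k.succAbove i) := by abel
          rw [this]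
          exact le_trans (le_max_right C₁ C₂)
            (hsep k (k.succAbove i) (Fin.succAbove_ne k i).symm)
    apply hball₂
    rw [Metric.mem_ball, hTf]
    calc dist ((T (a k) f₀ + R) + g₀) v ≤ dist (T (a k) f₀ + R) 0 + dist g₀ v :=
          tri2 _ _ _
      _ ≤ (dist (T (a k) f₀) 0 + dist R 0) + dist g₀ v := by
          have := tri2 (T (a k) f₀) R 0
          simpa using add_le_add_right this (dist g₀ v)
      _ < ε / 4 + ε / 4 + ε / 2 := by
          have := dist_comm v g₀ ▸ hg₀
          linarith
      _ = ε := by ring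
      _ ≤ ε₂ := min_le_right _ _
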